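/- Let f be a homogeneous polynomial of degree n ≥ 1 in the variables X_1,…,X_d over ℂ. Then for every natural number k ≥ 1, the Fischer norm squared of f^k satisfies ‖f^k‖² ≤ ((kn)! / (n!)^k) · (‖f‖²)^k. In particular, if ‖f‖² = 1 then ‖f^k‖² ≤ (kn)!/(n!)^k. (This is the quantitative content of Theorem 2: ⟨Ω| f^k f†^k |Ω⟩ equals (kn)!/(n!)^k times the squared norm of the projection of the k-fold tensor power of the corresponding n-photon state onto the symmetric subspace, and a projection does not increase norm.) -/

import Mathlib

open MvPolynomial

/-- The Fischer (Bombieri–Fock) squared norm of a polynomial: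
`‖f‖² = Σ_α |c_α(f)|² · α!` where `α! = ∏ i (α i)!`. -/
noncomputable def fischerNormSq {d : ℕ} (f : MvPolynomial (Fin d) ℂ) : ℝ :=
  ∑ α ∈ f.support, Complex.normSq (coeff α f) * (α.prod fun _ m => (m.factorial : ℝ))

section Aux

open Finset

lemma fischer_one_add_X_pow_eq (m : ℕ) :
    (1 + Polynomial.X : Polynomial ℕ) ^ m
      = ∑ u ∈ Finset.range (m + 1), Polynomial.C (m.choose u) * Polynomial.X ^ u := by
  ext k
  rw [Polynomial.coeff_one_add_X_pow, Polynomial.finset_sum_coeff]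
  simp only [Polynomial.coeff_C_mul, Polynomial.coeff_X_pow, mul_ite, mul_one, mul_zero,
    Nat.cast_id]
  rw [Finset.sum_ite_eq (Finset.range (m+1))]
  simp only [Finset.mem_range, Nat.lt_succ_iff]
  split
  · rfl
  · exact Nat.choose_eq_zero_of_lt (by omega)

/-- Multivariate Vandermonde identity over antidiagonals of finitely supported functions. -/
lemma fischer_vandermonde {d : ℕ} (γ : Fin d →₀ ℕ) (a : ℕ) :
    ∑ p ∈ Finset.HasAntidiagonal.antidiagonal γ,
        (if (∑ i, p.1 i) = a then ∏ i, (γ i).choose (p.1 i) else 0)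
      = (∑ i, γ i).choose a := by
  have h1 : ((1 + Polynomial.X : Polynomial ℕ) ^ (∑ i, γ i)).coeff a
      = (∑ i, γ i).choose a := by
    rw [Polynomial.coeff_one_add_X_pow, Nat.cast_id]
  rw [← h1, ← Finset.prod_pow_eq_pow_sum]
  conv_rhs => rw [Finset.prod_congr rfl (fun i _ => fischer_one_add_X_pow_eq (γ i))]
  rw [Finset.prod_univ_sum]
  have hterm : ∀ x : Fin d → ℕ,
      (∏ i, Polynomial.C ((γ i).choose (x i)) * Polynomial.X ^ (x i))
        = Polynomial.C (∏ i, (γ i).choose (x i)) * Polynomial.X ^ (∑ i, x i) := by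
    intro x
    rw [Finset.prod_mul_distrib, ← map_prod, Finset.prod_pow_eq_pow_sum]
  rw [Finset.sum_congr rfl fun x _ => hterm x, Polynomial.finset_sum_coeff]
  simp only [Polynomial.coeff_C_mul, Polynomial.coeff_X_pow, Nat.cast_id]
  refine (Finset.sum_nbij' (i := fun x => ((Finsupp.equivFunOnFinite.symm x,
      γ - Finsupp.equivFunOnFinite.symm x) : (Fin d →₀ ℕ) × (Fin d →₀ ℕ)))
    (j := fun p => (p.1 : Fin d → ℕ)) ?_ ?_ ?_ ?_ ?_).symm
  · intro x hx
    rw [Finset.HasAntidiagonal.mem_antidiagonal]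
    have hle : Finsupp.equivFunOnFinite.symm x ≤ γ := by
      rw [Finsupp.le_def]
      intro i
      simp only [Fintype.mem_piFinset, Finset.mem_range, Nat.lt_succ_iff] at hx
      simpa using hx i
    exact add_tsub_cancel_of_le hle
  · intro p hp
    rw [Finset.HasAntidiagonal.mem_antidiagonal] at hp
    simp only [Fintype.mem_piFinset, Finset.mem_range, Nat.lt_succ_iff]
    intro i
    have : p.1 i + p.2 i = γ i := by rw [← Finsupp.add_apply, hp]
    omega
  · intro x hx
    ext i
    simp
  · intro p hp
    rw [Finset.HasAntidiagonal.mem_antidiagonal] at hp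
    have hs : Finsupp.equivFunOnFinite.symm (⇑p.1) = p.1 :=
      Finsupp.equivFunOnFinite.symm_apply_apply p.1
    have h2 : γ - p.1 = p.2 := by
      rw [← hp]; ext i; simp
    show (Finsupp.equivFunOnFinite.symm ⇑p.1, γ - Finsupp.equivFunOnFinite.symm ⇑p.1) = p
    rw [hs, h2]
  · intro x hx
    simp only [Finsupp.coe_equivFunOnFinite_symm]
    rw [mul_ite, mul_one, mul_zero]
    exact if_congr eq_comm rfl rfl

/-- Submultiplicativity of the Fischer norm for homogeneous polynomials:
`‖fg‖² ≤ C(a+b,a) ‖f‖² ‖g‖²`. -/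
lemma fischer_mul_le {d a b : ℕ} {f g : MvPolynomial (Fin d) ℂ}
    (hf : f.IsHomogeneous a) (hg : g.IsHomogeneous b) :
    fischerNormSq (f * g) ≤ ((a + b).choose a : ℝ) * (fischerNormSq f * fischerNormSq g) := by
  classical
  set W : (Fin d →₀ ℕ) → ℝ := fun α => ∏ i, ((α i).factorial : ℝ) with hW
  have hWpos : ∀ α, 0 < W α := fun α => Finset.prod_pos fun i _ => by positivity
  have hWdef : ∀ α : Fin d →₀ ℕ, (α.prod fun _ m => (m.factorial : ℝ)) = W α :=
    fun α => Finsupp.prod_fintype _ _ fun i => by simp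
  set T : (Fin d →₀ ℕ) × (Fin d →₀ ℕ) → ℝ := fun p =>
    (Complex.normSq (coeff p.1 f) * W p.1) * (Complex.normSq (coeff p.2 g) * W p.2) with hT
  have hTnn : ∀ p, 0 ≤ T p := fun p =>
    mul_nonneg (mul_nonneg (Complex.normSq_nonneg _) (hWpos _).le)
      (mul_nonneg (Complex.normSq_nonneg _) (hWpos _).le)
  set s : (Fin d →₀ ℕ) → Finset ((Fin d →₀ ℕ) × (Fin d →₀ ℕ)) := fun γ =>
    (f.support ×ˢ g.support).filter fun p => p.1 + p.2 = γ with hs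
  have hmem : ∀ γ p, p ∈ s γ ↔ (coeff p.1 f ≠ 0 ∧ coeff p.2 g ≠ 0 ∧ p.1 + p.2 = γ) := by
    intro γ p
    simp [hs, Finset.mem_filter, Finset.mem_product, MvPolynomial.mem_support_iff, and_assoc]
  have hdeg : ∀ (h : MvPolynomial (Fin d) ℂ) (m : ℕ), h.IsHomogeneous m →
      ∀ α, coeff α h ≠ 0 → ∑ i, α i = m := by
    intro h m hh α hα
    have h1 : Finsupp.degree α = m := by
      rw [Finsupp.degree_eq_weight_one]; exact hh hα
    rw [← h1]
    exact (Finset.sum_subset (Finset.subset_univ _)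
      fun i _ hi => Finsupp.notMem_support_iff.mp hi).symm
  have hcoeff : ∀ γ, coeff γ (f * g) = ∑ p ∈ s γ, coeff p.1 f * coeff p.2 g := by
    intro γ
    rw [MvPolynomial.coeff_mul]
    refine (Finset.sum_subset ?_ ?_).symm
    · intro p hp
      rw [Finset.HasAntidiagonal.mem_antidiagonal]
      exact ((hmem γ p).mp hp).2.2
    · intro p hp hns
      rw [Finset.HasAntidiagonal.mem_antidiagonal] at hp
      by_cases h1 : coeff p.1 f = 0
      · rw [h1, zero_mul]
      by_cases h2 : coeff p.2 g = 0
      · rw [h2, mul_zero]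
      exact absurd ((hmem γ p).mpr ⟨h1, h2, hp⟩) hns
  have key : ∀ γ, Complex.normSq (coeff γ (f * g)) * W γ
      ≤ ((a + b).choose a : ℝ) * ∑ p ∈ s γ, T p := by
    intro γ
    rcases (s γ).eq_empty_or_nonempty with he | ⟨p₀, hp₀⟩
    · rw [hcoeff γ, he]
      simp
    set M : (Fin d →₀ ℕ) × (Fin d →₀ ℕ) → ℝ :=
      fun p => ((∏ i, (γ i).choose (p.1 i) : ℕ) : ℝ) with hM
    have hMpos : ∀ p ∈ s γ, 0 < M p := by
      intro p hp
      have h3 := ((hmem γ p).mp hp).2.2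
      have hle : ∀ i, p.1 i ≤ γ i := fun i => by
        have : p.1 i + p.2 i = γ i := by rw [← Finsupp.add_apply, h3]
        omega
      rw [hM]
      exact_mod_cast Nat.cast_pos.mpr (Finset.prod_pos fun i _ => Nat.choose_pos (hle i))
    have hdeg1 : ∀ p ∈ s γ, ∑ i, p.1 i = a := fun p hp =>
      hdeg f a hf _ ((hmem γ p).mp hp).1
    have hdeg2 : ∀ p ∈ s γ, ∑ i, p.2 i = b := fun p hp =>
      hdeg g b hg _ ((hmem γ p).mp hp).2.1
    have hγdeg : ∑ i, γ i = a + b := by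
      have h3 := ((hmem γ p₀).mp hp₀).2.2
      rw [← h3]
      simp only [Finsupp.add_apply, Finset.sum_add_distrib]
      rw [hdeg1 p₀ hp₀, hdeg2 p₀ hp₀]
    have hMsum : ∑ p ∈ s γ, M p ≤ ((a + b).choose a : ℝ) := by
      have hnat : (∑ p ∈ s γ, ∏ i, (γ i).choose (p.1 i)) ≤ (∑ i, γ i).choose a := by
        rw [← fischer_vandermonde γ a,
          show (∑ p ∈ s γ, ∏ i, (γ i).choose (p.1 i))
              = ∑ p ∈ s γ, (if (∑ i, p.1 i) = a then ∏ i, (γ i).choose (p.1 i) else 0) from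
            Finset.sum_congr rfl fun p hp => by rw [if_pos (hdeg1 p hp)]]
        apply Finset.sum_le_sum_of_subset
        intro p hp
        rw [Finset.HasAntidiagonal.mem_antidiagonal]
        exact ((hmem γ p).mp hp).2.2
      rw [hγdeg] at hnat
      calc ∑ p ∈ s γ, M p
          = ((∑ p ∈ s γ, ∏ i, (γ i).choose (p.1 i) : ℕ) : ℝ) := by
            rw [hM, Nat.cast_sum]
        _ ≤ _ := by exact_mod_cast hnat
    have hCS : Complex.normSq (coeff γ (f * g))
        ≤ (∑ p ∈ s γ, M p)
          * (∑ p ∈ s γ, Complex.normSq (coeff p.1 f * coeff p.2 g) / M p) := by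
      rw [hcoeff γ]
      have h1 : Complex.normSq (∑ p ∈ s γ, coeff p.1 f * coeff p.2 g)
          ≤ (∑ p ∈ s γ, ‖coeff p.1 f * coeff p.2 g‖) ^ 2 := by
        rw [← Complex.sq_norm]
        exact pow_le_pow_left₀ (norm_nonneg _)
          (norm_sum_le (s γ) _) 2
      have h2 : (∑ p ∈ s γ, ‖coeff p.1 f * coeff p.2 g‖) ^ 2
          ≤ (∑ p ∈ s γ, Real.sqrt (M p) ^ 2)
            * (∑ p ∈ s γ, (‖coeff p.1 f * coeff p.2 g‖ / Real.sqrt (M p)) ^ 2) := by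
        have hcs := Finset.sum_mul_sq_le_sq_mul_sq (s γ) (fun p => Real.sqrt (M p))
          (fun p => ‖coeff p.1 f * coeff p.2 g‖ / Real.sqrt (M p))
        refine le_trans (le_of_eq ?_) hcs
        refine congrArg (· ^ 2) (Finset.sum_congr rfl fun p hp => ?_).symm
        rw [mul_div_cancel₀]
        exact (Real.sqrt_pos.mpr (hMpos p hp)).ne'
      have h3 : (∑ p ∈ s γ, Real.sqrt (M p) ^ 2) = ∑ p ∈ s γ, M p :=
        Finset.sum_congr rfl fun p hp => Real.sq_sqrt (hMpos p hp).le
      have h4 : (∑ p ∈ s γ, (‖coeff p.1 f * coeff p.2 g‖ / Real.sqrt (M p)) ^ 2)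
          = ∑ p ∈ s γ, Complex.normSq (coeff p.1 f * coeff p.2 g) / M p := by
        refine Finset.sum_congr rfl fun p hp => ?_
        rw [div_pow, Real.sq_sqrt (hMpos p hp).le, Complex.sq_norm]
      rw [h3, h4] at h2
      exact h1.trans h2
    have hwγ : ∀ p ∈ s γ, Complex.normSq (coeff p.1 f * coeff p.2 g) / M p * W γ = T p := by
      intro p hp
      have h3 := ((hmem γ p).mp hp).2.2
      have hfact : W γ = M p * (W p.1 * W p.2) := by
        show (∏ i, ((γ i).factorial : ℝ))
          = ((∏ i, (γ i).choose (p.1 i) : ℕ) : ℝ)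
            * ((∏ i, ((p.1 i).factorial : ℝ)) * (∏ i, ((p.2 i).factorial : ℝ)))
        rw [Nat.cast_prod, ← Finset.prod_mul_distrib, ← Finset.prod_mul_distrib]
        refine Finset.prod_congr rfl fun i _ => ?_
        have hγi : γ i = p.1 i + p.2 i := by rw [← h3]; simp
        have hnat : (γ i).factorial
            = (γ i).choose (p.1 i) * ((p.1 i).factorial * (p.2 i).factorial) := by
          have hcc := Nat.choose_mul_factorial_mul_factorial (Nat.le_add_right (p.1 i) (p.2 i))
          rw [Nat.add_sub_cancel_left] at hcc
          rw [hγi, ← hcc, mul_assoc]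
        exact_mod_cast congrArg (fun x : ℕ => (x : ℝ)) hnat
      have hMne : M p ≠ 0 := (hMpos p hp).ne'
      rw [map_mul Complex.normSq, hfact, hT]
      field_simp
    calc Complex.normSq (coeff γ (f * g)) * W γ
        ≤ ((∑ p ∈ s γ, M p)
            * (∑ p ∈ s γ, Complex.normSq (coeff p.1 f * coeff p.2 g) / M p)) * W γ :=
          mul_le_mul_of_nonneg_right hCS (hWpos γ).le
      _ = (∑ p ∈ s γ, M p)
            * (∑ p ∈ s γ, Complex.normSq (coeff p.1 f * coeff p.2 g) / M p * W γ) := by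
          rw [mul_assoc]
          exact congrArg _ (Finset.sum_mul _ _ _)
      _ = (∑ p ∈ s γ, M p) * (∑ p ∈ s γ, T p) := by
          rw [Finset.sum_congr rfl hwγ]
      _ ≤ ((a + b).choose a : ℝ) * ∑ p ∈ s γ, T p :=
          mul_le_mul_of_nonneg_right hMsum (Finset.sum_nonneg fun p _ => hTnn p)
  have hFfg : fischerNormSq (f * g)
      = ∑ γ ∈ (f * g).support, Complex.normSq (coeff γ (f * g)) * W γ :=
    Finset.sum_congr rfl fun γ _ => by rw [hWdef]
  rw [hFfg]
  have step1 : ∑ γ ∈ (f * g).support, Complex.normSq (coeff γ (f * g)) * W γ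
      ≤ ((a + b).choose a : ℝ) * ∑ γ ∈ (f * g).support, ∑ p ∈ s γ, T p := by
    rw [Finset.mul_sum]
    exact Finset.sum_le_sum fun γ _ => key γ
  refine step1.trans ?_
  have hdisj : Set.PairwiseDisjoint (↑((f * g).support)) s := by
    intro γ1 _ γ2 _ hne
    refine Finset.disjoint_left.mpr fun p hp1 hp2 => hne ?_
    rw [← ((hmem γ1 p).mp hp1).2.2, ← ((hmem γ2 p).mp hp2).2.2]
  rw [← Finset.sum_biUnion hdisj]
  have hsub : (f * g).support.biUnion s ⊆ f.support ×ˢ g.support := by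
    intro p hp
    rw [Finset.mem_biUnion] at hp
    obtain ⟨γ, _, hps⟩ := hp
    exact Finset.filter_subset _ _ hps
  have step2 : ∑ p ∈ (f * g).support.biUnion s, T p
      ≤ ∑ p ∈ f.support ×ˢ g.support, T p :=
    Finset.sum_le_sum_of_subset_of_nonneg hsub fun p _ _ => hTnn p
  have step3 : ∑ p ∈ f.support ×ˢ g.support, T p = fischerNormSq f * fischerNormSq g := by
    rw [hT, Finset.sum_product]
    unfold fischerNormSq
    rw [Finset.sum_mul_sum]
    exact Finset.sum_congr rfl fun α _ => Finset.sum_congr rfl fun β _ => by rw [hWdef, hWdef]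
  rw [← step3]
  exact mul_le_mul_of_nonneg_left step2 (Nat.cast_nonneg _)

end Aux

/-- For `f` homogeneous of degree `n ≥ 1` and any `k ≥ 1`,
`‖f^k‖² ≤ ((kn)!/(n!)^k) · (‖f‖²)^k`. -/
theorem fischerNormSq_pow_le (d n : ℕ) (hn : 1 ≤ n) (f : MvPolynomial (Fin d) ℂ)
    (hf : f.IsHomogeneous n) (k : ℕ) (hk : 1 ≤ k) :
    fischerNormSq (f ^ k) ≤
      (((k * n).factorial : ℝ) / ((n.factorial : ℝ)) ^ k) * (fischerNormSq f) ^ k := by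
  have hFnn : ∀ h : MvPolynomial (Fin d) ℂ, 0 ≤ fischerNormSq h := by
    intro h
    refine Finset.sum_nonneg fun α _ => mul_nonneg (Complex.normSq_nonneg _) ?_
    rw [Finsupp.prod_fintype _ _ (fun i => by simp)]
    exact Finset.prod_nonneg fun i _ => by positivity
  induction k, hk using Nat.le_induction with
  | base =>
    rw [pow_one, pow_one, one_mul, pow_one, div_self (by positivity), one_mul]
  | succ k hk ih =>
    have hhom : (f ^ k).IsHomogeneous (k * n) := by
      simpa [mul_comm] using hf.pow k
    have hmul := fischer_mul_le hhom hf
    rw [pow_succ]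
    calc fischerNormSq (f ^ k * f)
        ≤ ((k * n + n).choose (k * n) : ℝ) * (fischerNormSq (f ^ k) * fischerNormSq f) := hmul
      _ ≤ ((k * n + n).choose (k * n) : ℝ)
            * (((((k * n).factorial : ℝ) / ((n.factorial : ℝ)) ^ k) * fischerNormSq f ^ k)
              * fischerNormSq f) :=
          mul_le_mul_of_nonneg_left (mul_le_mul_of_nonneg_right ih (hFnn f)) (Nat.cast_nonneg _)
      _ = ((((k + 1) * n).factorial : ℝ) / ((n.factorial : ℝ)) ^ (k + 1))
            * fischerNormSq f ^ (k + 1) := by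
          have hkey : ((((k + 1) * n).factorial : ℕ) : ℝ)
              = ((k * n + n).choose (k * n) : ℝ) * (((k * n).factorial : ℕ) : ℝ)
                * ((n.factorial : ℕ) : ℝ) := by
            have hcc := Nat.choose_mul_factorial_mul_factorial (Nat.le_add_right (k * n) n)
            rw [Nat.add_sub_cancel_left] at hcc
            have h2 : (k + 1) * n = k * n + n := by ring
            rw [h2]
            exact_mod_cast hcc.symm
          rw [pow_succ (fischerNormSq f), pow_succ ((n.factorial : ℝ)), hkey]
          have hne : (n.factorial : ℝ) ≠ 0 := by positivity
          have hne2 : ((n.factorial : ℝ)) ^ k ≠ 0 := pow_ne_zero _ hne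
          field_simp
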